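/- Let Q be an inverse quantal frame and X a Q-sheaf. For every principal section s of X, every partial unit u ∈ Q_I, and every x ∈ X, one has s ∧ u(s ∧ x) ≤ x. -/

import Mathlib

/-- A unital involutive quantale: a complete lattice with an associative
multiplication preserving arbitrary joins in each variable, a unit `e`, and a
join-preserving involution. -/
structure UnitalInvQuantale (Q : Type*) [CompleteLattice Q] where
  mul : Q → Q → Q
  e : Q
  star : Q → Q
  mul_assoc : ∀ a b c, mul (mul a b) c = mul a (mul b c)
  sSup_mul : ∀ (S : Set Q) (b : Q), mul (sSup S) b = ⨆ a ∈ S, mul a b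
  mul_sSup : ∀ (a : Q) (S : Set Q), mul a (sSup S) = ⨆ b ∈ S, mul a b
  e_mul : ∀ a, mul e a = a
  mul_e : ∀ a, mul a e = a
  star_star : ∀ a, star (star a) = a
  star_mul : ∀ a b, star (mul a b) = mul (star b) (star a)
  star_sSup : ∀ S : Set Q, star (sSup S) = ⨆ a ∈ S, star a

/-- The set of partial units of a quantale. -/
def UnitalInvQuantale.PU {Q : Type*} [CompleteLattice Q] (Qs : UnitalInvQuantale Q) : Set Q :=
  {s | Qs.mul s (Qs.star s) ≤ Qs.e ∧ Qs.mul (Qs.star s) s ≤ Qs.e}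

/-- An inverse quantal frame: a unital involutive quantale which is a frame,
has a stable support, and whose partial units join to the top. -/
structure InverseQuantalFrame (Q : Type*) [Order.Frame Q] extends toQuantale : UnitalInvQuantale Q where
  supp : Q → Q
  supp_le_e : ∀ a, supp a ≤ e
  supp_sSup : ∀ S : Set Q, supp (sSup S) = ⨆ a ∈ S, supp a
  supp_le_mul_star : ∀ a, supp a ≤ mul a (star a)
  le_supp_mul : ∀ a, a ≤ mul (supp a) a
  supp_stable : ∀ b a, b ≤ e → supp (mul b a) = mul b (supp a)
  sSup_PU : sSup {s | mul s (star s) ≤ e ∧ mul (star s) s ≤ e} = ⊤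

/-- A left module over a quantale: a complete lattice with a unital associative
action preserving arbitrary joins in each variable. -/
structure QuantaleModule {Q : Type*} [CompleteLattice Q] (Qs : UnitalInvQuantale Q)
    (X : Type*) [CompleteLattice X] where
  act : Q → X → X
  act_mul : ∀ a b x, act (Qs.mul a b) x = act a (act b x)
  act_e : ∀ x, act Qs.e x = x
  sSup_act : ∀ (S : Set Q) (x : X), act (sSup S) x = ⨆ a ∈ S, act a x
  act_sSup : ∀ (a : Q) (S : Set X), act a (sSup S) = ⨆ x ∈ S, act a x

/-- A pre-Hilbert module over a quantale. -/
structure PreHilbertModule {Q : Type*} [CompleteLattice Q] (Qs : UnitalInvQuantale Q)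
    (X : Type*) [CompleteLattice X] extends QuantaleModule Qs X where
  inner : X → X → Q
  inner_act : ∀ a x y, inner (act a x) y = Qs.mul a (inner x y)
  sSup_inner : ∀ (S : Set X) (y : X), inner (sSup S) y = ⨆ x ∈ S, inner x y
  inner_star : ∀ x y, inner x y = Qs.star (inner y x)

namespace PreHilbertModule

variable {Q X : Type*} [CompleteLattice Q] [CompleteLattice X] {Qs : UnitalInvQuantale Q}

/-- A Hilbert section: `⟨x,s⟩s ≤ x` for all `x`. -/
def IsHilbertSection (H : PreHilbertModule Qs X) (s : X) : Prop :=
  ∀ x, H.act (H.inner x s) s ≤ x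

/-- A regular element: `⟨s,s⟩s = s`. -/
def IsRegularSection (H : PreHilbertModule Qs X) (s : X) : Prop :=
  H.act (H.inner s s) s = s

/-- A Hilbert basis: `x = ⋁_{t ∈ S} ⟨x,t⟩t` for all `x`. -/
def IsHilbertBasis (H : PreHilbertModule Qs X) (S : Set X) : Prop :=
  ∀ x, x = ⨆ t ∈ S, H.act (H.inner x t) t

/-- Non-degeneracy of the inner product. -/
def Nondegenerate (H : PreHilbertModule Qs X) : Prop :=
  ∀ x y, (∀ z, H.inner x z = H.inner y z) → x = y

end PreHilbertModule

/-- A `Q`-locale over an inverse quantal frame: a module which is a frame and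
satisfies the anchor condition. -/
structure QLocale {Q : Type*} [Order.Frame Q] (Qf : InverseQuantalFrame Q)
    (X : Type*) [Order.Frame X] extends QuantaleModule Qf.toQuantale X where
  anchor : ∀ b x, b ≤ Qf.e → act b x = act b ⊤ ⊓ x

/-- A `Q`-sheaf over an inverse quantal frame: a pre-Hilbert module which is a
frame, satisfies the anchor condition, and has a Hilbert basis. -/
structure QSheaf {Q : Type*} [Order.Frame Q] (Qf : InverseQuantalFrame Q)
    (X : Type*) [Order.Frame X] extends PreHilbertModule Qf.toQuantale X where
  anchor : ∀ b x, b ≤ Qf.e → act b x = act b ⊤ ⊓ x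
  hasBasis : ∃ S : Set X, ∀ x, x = ⨆ t ∈ S, act (inner x t) t

namespace QSheaf

variable {Q X : Type*} [Order.Frame Q] [Order.Frame X] {Qf : InverseQuantalFrame Q}

/-- The support `ς_X(x) = ⟨x,x⟩ ∧ e` of a `Q`-sheaf. -/
def sppX (H : QSheaf Qf X) (x : X) : Q := H.inner x x ⊓ Qf.e

/-- A local section: `ς_X(x)s = x` for all `x ≤ s`. -/
def IsLocalSection (H : QSheaf Qf X) (s : X) : Prop :=
  ∀ x ≤ s, H.act (H.sppX x) s = x

/-- A principal section: a local section with `⟨s,s⟩ ≤ e`. -/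
def IsPrincipalSection (H : QSheaf Qf X) (s : X) : Prop :=
  H.IsLocalSection s ∧ H.inner s s ≤ Qf.e

/-- A right local section: `x = s ∧ 1_Q·x` for all `x ≤ s`. -/
def IsRightLocalSection (H : QSheaf Qf X) (s : X) : Prop :=
  ∀ x ≤ s, x = s ⊓ H.act ⊤ x

/-- A local bisection: simultaneously a local section and a right local section. -/
def IsBisection (H : QSheaf Qf X) (s : X) : Prop :=
  H.IsLocalSection s ∧ H.IsRightLocalSection s

end QSheaf

section Aux

variable {Q : Type*} [CompleteLattice Q] (Qs : UnitalInvQuantale Q)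

lemma UnitalInvQuantale.mul_mono_left {a b : Q} (c : Q) (h : a ≤ b) :
    Qs.mul a c ≤ Qs.mul b c := by
  have h1 := Qs.sSup_mul {a, b} c
  rw [sSup_pair, sup_eq_right.mpr h] at h1
  rw [h1]
  exact le_biSup (fun x => Qs.mul x c) (by simp : a ∈ ({a, b} : Set Q))

lemma UnitalInvQuantale.mul_mono_right (a : Q) {b c : Q} (h : b ≤ c) :
    Qs.mul a b ≤ Qs.mul a c := by
  have h1 := Qs.mul_sSup a {b, c}
  rw [sSup_pair, sup_eq_right.mpr h] at h1
  rw [h1]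
  exact le_biSup (fun x => Qs.mul a x) (by simp : b ∈ ({b, c} : Set Q))

lemma UnitalInvQuantale.mul_mono {a b c d : Q} (h1 : a ≤ b) (h2 : c ≤ d) :
    Qs.mul a c ≤ Qs.mul b d :=
  le_trans (Qs.mul_mono_left c h1) (Qs.mul_mono_right b h2)

lemma UnitalInvQuantale.star_mono {a b : Q} (h : a ≤ b) : Qs.star a ≤ Qs.star b := by
  have h1 := Qs.star_sSup {a, b}
  rw [sSup_pair, sup_eq_right.mpr h] at h1
  rw [h1]
  exact le_biSup (fun x => Qs.star x) (by simp : a ∈ ({a, b} : Set Q))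

variable {X : Type*} [CompleteLattice X] (H : PreHilbertModule Qs X)

lemma PreHilbertModule.act_mono_left {a b : Q} (x : X) (h : a ≤ b) :
    H.act a x ≤ H.act b x := by
  have h1 := H.sSup_act {a, b} x
  rw [sSup_pair, sup_eq_right.mpr h] at h1
  rw [h1]
  exact le_biSup (fun c => H.act c x) (by simp : a ∈ ({a, b} : Set Q))

lemma PreHilbertModule.inner_mono_left {x y : X} (z : X) (h : x ≤ y) :
    H.inner x z ≤ H.inner y z := by
  have h1 := H.sSup_inner {x, y} z
  rw [sSup_pair, sup_eq_right.mpr h] at h1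
  rw [h1]
  exact le_biSup (fun w => H.inner w z) (by simp : x ∈ ({x, y} : Set X))

lemma PreHilbertModule.star_inner (x y : X) :
    Qs.star (H.inner x y) = H.inner y x := by
  rw [H.inner_star y x]

lemma PreHilbertModule.inner_mono_right (x : X) {y z : X} (h : y ≤ z) :
    H.inner x y ≤ H.inner x z := by
  rw [H.inner_star x y, H.inner_star x z]
  exact Qs.star_mono (H.inner_mono_left Qs x h)

end Aux

/-- For every principal section `s` of a `Q`-sheaf, every partial
unit `u` and every `x`, one has `s ∧ u(s ∧ x) ≤ x`. -/
theorem stmt14 {Q X : Type*} [Order.Frame Q] [Order.Frame X]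
    (Qf : InverseQuantalFrame Q) (H : QSheaf Qf X)
    (s : X) (hs : H.IsPrincipalSection s)
    (u : Q) (hu : u ∈ Qf.toQuantale.PU) (x : X) :
    s ⊓ H.act u (s ⊓ x) ≤ x := by
  obtain ⟨hloc, hss⟩ := hs
  set Qs := Qf.toQuantale with hQs
  set y := s ⊓ H.act u (s ⊓ x) with hy
  have hys : y ≤ s := inf_le_left
  have hsx : s ⊓ x ≤ s := inf_le_left
  -- ⟨z, s⟩ ≤ e for z ≤ s
  have hinner_le_e : ∀ z : X, z ≤ s → H.inner z s ≤ Qs.e := fun z hz =>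
    le_trans (le_trans (H.toPreHilbertModule.inner_mono_left Qs s hz)
      (le_of_eq rfl)) hss
  -- y = ς(y) • s
  have hyeq : H.act (H.sppX y) s = y := hloc y hys
  -- a' := ⟨y, s ⊓ x⟩
  set a' := H.inner y (s ⊓ x) with ha'
  have ha'e : a' ≤ Qs.e := by
    refine le_trans ?_ hss
    exact le_trans (H.toPreHilbertModule.inner_mono_left Qs (s ⊓ x) hys)
      (H.toPreHilbertModule.inner_mono_right Qs s hsx)
  -- ⟨y,y⟩ ≤ ⟨y, u•(s⊓x)⟩ = a' u*
  have hkey : H.inner y y ≤ Qs.mul a' (Qs.star u) := by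
    have h1 : H.inner y y ≤ H.inner y (H.act u (s ⊓ x)) :=
      H.toPreHilbertModule.inner_mono_right Qs y inf_le_right
    have h2 : H.inner y (H.act u (s ⊓ x)) = Qs.mul a' (Qs.star u) := by
      rw [H.inner_star y (H.act u (s ⊓ x)), H.inner_act, Qs.star_mul,
        H.toPreHilbertModule.star_inner Qs]
    exact h2 ▸ h1
  -- w := a' u* ⊓ e; then ς(y) ≤ w
  set w := Qs.mul a' (Qs.star u) ⊓ Qs.e with hw
  have hsw : H.sppX y ≤ w :=
    inf_le_inf_right _ hkey
  -- w ≤ a'*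
  have hwa : w ≤ Qs.star a' := by
    have h1 : w ≤ Qs.mul (Qs.mul w (Qs.star w)) w := by
      calc w ≤ Qs.mul (Qf.supp w) w := Qf.le_supp_mul w
        _ ≤ Qs.mul (Qs.mul w (Qs.star w)) w :=
          Qs.mul_mono_left w (Qf.supp_le_mul_star w)
    have h2 : Qs.mul (Qs.mul w (Qs.star w)) w ≤
        Qs.mul (Qs.mul (Qs.mul a' (Qs.star u)) (Qs.mul u (Qs.star a'))) Qs.e := by
      refine Qs.mul_mono (Qs.mul_mono inf_le_left ?_) inf_le_right
      have := Qs.star_mono (inf_le_left : w ≤ Qs.mul a' (Qs.star u))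
      rwa [Qs.star_mul, Qs.star_star] at this
    have h3 : Qs.mul (Qs.mul (Qs.mul a' (Qs.star u)) (Qs.mul u (Qs.star a'))) Qs.e
        ≤ Qs.star a' := by
      rw [Qs.mul_e]
      calc Qs.mul (Qs.mul a' (Qs.star u)) (Qs.mul u (Qs.star a'))
          = Qs.mul a' (Qs.mul (Qs.mul (Qs.star u) u) (Qs.star a')) := by
            rw [Qs.mul_assoc, Qs.mul_assoc]
        _ ≤ Qs.mul a' (Qs.mul Qs.e (Qs.star a')) :=
            Qs.mul_mono_right a' (Qs.mul_mono_left _ hu.2)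
        _ = Qs.mul a' (Qs.star a') := by rw [Qs.e_mul]
        _ ≤ Qs.mul Qs.e (Qs.star a') := Qs.mul_mono_left _ ha'e
        _ = Qs.star a' := Qs.e_mul _
    exact le_trans h1 (le_trans h2 h3)
  -- a'* = ⟨s⊓x, y⟩ ≤ ⟨s⊓x, s⟩ ≤ ς(s⊓x)
  have hstar : Qs.star a' = H.inner (s ⊓ x) y :=
    H.toPreHilbertModule.star_inner Qs y (s ⊓ x)
  have hfin : Qs.star a' ≤ H.sppX (s ⊓ x) := by
    rw [hstar]
    have h1 : H.inner (s ⊓ x) y ≤ H.inner (s ⊓ x) s :=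
      H.toPreHilbertModule.inner_mono_right Qs (s ⊓ x) hys
    have h2 : H.inner (s ⊓ x) s ≤ H.sppX (s ⊓ x) := by
      have heq : H.act (H.sppX (s ⊓ x)) s = s ⊓ x := hloc (s ⊓ x) hsx
      have : H.inner (s ⊓ x) s = Qs.mul (H.sppX (s ⊓ x)) (H.inner s s) := by
        conv_lhs => rw [← heq]
        rw [H.inner_act]
      rw [this]
      calc Qs.mul (H.sppX (s ⊓ x)) (H.inner s s)
          ≤ Qs.mul (H.sppX (s ⊓ x)) Qs.e := Qs.mul_mono_right _ hss
        _ = H.sppX (s ⊓ x) := Qs.mul_e _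
    exact le_trans h1 h2
  -- conclude
  have : y ≤ s ⊓ x := by
    calc y = H.act (H.sppX y) s := hyeq.symm
      _ ≤ H.act (H.sppX (s ⊓ x)) s :=
        H.toPreHilbertModule.act_mono_left Qs s
          (le_trans hsw (le_trans hwa hfin))
      _ = s ⊓ x := hloc (s ⊓ x) hsx
  exact le_trans this inf_le_right
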